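/- Let n ∈ ℕ, and let a₁,…,aₙ ∈ ℂ and θ₁,…,θₙ ∈ (0,1] satisfy ∑_{k=1}^n a_k·θ_k = 0. Define F(x) = ∑_{k=1}^n a_k·frac(θ_k/x) for x ∈ (0,1]. Then for every complex s with Re(s) > 1, ∫₀¹ (F(x) + 1)·x^{s−1} dx = (1/s)·(1 − ζ(s)·∑_{k=1}^n a_k·θ_k^s). -/

import Mathlib

open MeasureTheory Set Filter Topology

-- a.e. strong measurability of cpow on Ioc
lemma aux_cpow_cont (c : ℂ) (hc : 0 < c.re) : Continuous (fun x : ℝ ↦ (x:ℂ) ^ c) :=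
  Complex.continuous_ofReal_cpow_const hc

-- integrability of x^(s-1) on Ioc 0 1
lemma aux_int_cpow {c : ℂ} (hc : -1 < c.re) :
    IntegrableOn (fun x : ℝ ↦ (x:ℂ) ^ c) (Ioc (0:ℝ) 1) := by
  rw [← intervalIntegrable_iff_integrableOn_Ioc_of_le zero_le_one]
  exact intervalIntegral.intervalIntegrable_cpow' hc

lemma aux_floor_meas (θ : ℝ) {c : ℂ} (hc : 0 < c.re) :
    AEStronglyMeasurable (fun x : ℝ ↦ ((⌊θ / x⌋ : ℤ) : ℂ) * (x:ℂ) ^ c)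
      (volume.restrict (Ioc (0:ℝ) 1)) := by
  refine AEStronglyMeasurable.mul ?_ ((aux_cpow_cont c hc).aestronglyMeasurable) 
  have h1 : Measurable (fun x : ℝ ↦ ((⌊θ / x⌋ : ℤ) : ℂ)) := by
    exact (measurable_of_countable (fun k : ℤ ↦ (k : ℂ))).comp
      (Int.measurable_floor.comp (measurable_const.div measurable_id))
  exact h1.aestronglyMeasurable

lemma aux_norm_cpow {x : ℝ} (hx : 0 < x) (c : ℂ) : ‖(x:ℂ) ^ c‖ = x ^ c.re := by
  rw [Complex.norm_cpow_eq_rpow_re_of_pos hx]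

lemma aux_int_rpow {r : ℝ} (hr : -1 < r) :
    IntegrableOn (fun x : ℝ ↦ x ^ r) (Ioc (0:ℝ) 1) := by
  rw [← intervalIntegrable_iff_integrableOn_Ioc_of_le zero_le_one]
  exact intervalIntegral.intervalIntegrable_rpow' hr

lemma aux_floor_int (θ : ℝ) (hθ0 : 0 < θ) {s : ℂ} (hs : 1 < s.re) :
    IntegrableOn (fun x : ℝ ↦ ((⌊θ / x⌋ : ℤ) : ℂ) * (x:ℂ) ^ (s-1)) (Ioc (0:ℝ) 1) := by
  refine Integrable.mono ((aux_int_rpow (r := s.re - 2) (by linarith)).const_mul θ)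
    (aux_floor_meas θ (by simp; linarith)) ?_
  rw [ae_restrict_iff' measurableSet_Ioc]
  filter_upwards with x hx
  have hx0 : 0 < x := hx.1
  have hfl0 : (0:ℝ) ≤ (⌊θ / x⌋ : ℝ) := by
    exact_mod_cast Int.floor_nonneg.mpr (le_of_lt (by positivity))
  have hfl : (⌊θ / x⌋ : ℝ) ≤ θ / x := Int.floor_le _
  rw [norm_mul, aux_norm_cpow hx0, Real.norm_eq_abs,
    abs_of_nonneg (mul_nonneg hθ0.le (Real.rpow_nonneg hx0.le _)),
    Complex.norm_intCast, abs_of_nonneg hfl0]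
  simp only [Complex.sub_re, Complex.one_re]
  calc (⌊θ / x⌋ : ℝ) * x ^ (s.re - 1) ≤ (θ / x) * x ^ (s.re - 1) := by
        gcongr
    _ = θ * x ^ (s.re - 2) := by
        rw [show s.re - 1 = (s.re - 2) + 1 by ring, Real.rpow_add_one hx0.ne']
        field_simp

lemma aux_fract_int (θ : ℝ) {s : ℂ} (hs : 1 < s.re) :
    IntegrableOn (fun x : ℝ ↦ ((Int.fract (θ / x) : ℝ) : ℂ) * (x:ℂ) ^ (s-1)) (Ioc (0:ℝ) 1) := by
  have hm : AEStronglyMeasurable (fun x : ℝ ↦ ((Int.fract (θ / x) : ℝ) : ℂ) * (x:ℂ) ^ (s-1))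
      (volume.restrict (Ioc (0:ℝ) 1)) := by
    refine AEStronglyMeasurable.mul ?_ ((aux_cpow_cont (s-1) (by simp; linarith)).aestronglyMeasurable)
    exact (Complex.measurable_ofReal.comp
      ((measurable_fract).comp (measurable_const.div measurable_id))).aestronglyMeasurable
  refine Integrable.mono (aux_int_rpow (r := s.re - 1) (by linarith)) hm ?_
  rw [ae_restrict_iff' measurableSet_Ioc]
  filter_upwards with x hx
  rw [norm_mul, aux_norm_cpow hx.1, Complex.norm_real, Real.norm_eq_abs,
    abs_of_nonneg (Int.fract_nonneg _), Real.norm_eq_abs,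
    abs_of_nonneg (Real.rpow_nonneg hx.1.le _)]
  simp only [Complex.sub_re, Complex.one_re]
  nlinarith [Int.fract_lt_one (θ / x), Real.rpow_nonneg hx.1.le (s.re - 1),
    Int.fract_nonneg (θ / x)]

lemma aux_union (θ : ℝ) (hθ0 : 0 < θ) :
    (⋃ n : ℕ, Ioc (θ / (n + 2)) (θ / (n + 1))) = Ioc (0:ℝ) θ := by
  ext x
  simp only [mem_iUnion, mem_Ioc]
  constructor
  · rintro ⟨n, h1, h2⟩
    have hn2 : (0:ℝ) < (n:ℝ) + 2 := by positivity
    have hn1 : (0:ℝ) < (n:ℝ) + 1 := by positivity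
    refine ⟨lt_of_le_of_lt (by positivity) h1, h2.trans ?_⟩
    rw [div_le_iff₀ hn1]
    nlinarith
  · rintro ⟨h1, h2⟩
    have hd1 : (1:ℝ) ≤ θ / x := (le_div_iff₀ h1).mpr (by linarith)
    set m : ℤ := ⌊θ / x⌋ with hm
    have hm1 : (1:ℤ) ≤ m := by exact_mod_cast Int.le_floor.mpr (by exact_mod_cast hd1)
    have hmnn : (0:ℤ) ≤ m - 1 := by omega
    have hcast : ((m - 1).toNat : ℝ) = (m:ℝ) - 1 := by
      have h := Int.toNat_of_nonneg hmnn
      exact_mod_cast congrArg (Int.cast : ℤ → ℝ) h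
    have hmpos : (0:ℝ) < (m:ℝ) := by exact_mod_cast hm1.trans_lt' (by norm_num)
    refine ⟨(m - 1).toNat, ?_, ?_⟩
    · rw [hcast, show (m:ℝ) - 1 + 2 = (m:ℝ) + 1 by ring, div_lt_iff₀ (by positivity)]
      have hlt := Int.lt_floor_add_one (θ / x)
      rw [← hm] at hlt
      nlinarith [(div_lt_iff₀ h1).mp hlt]
    · rw [hcast, show (m:ℝ) - 1 + 1 = (m:ℝ) by ring, le_div_iff₀ hmpos]
      have hle : (m:ℝ) ≤ θ / x := Int.floor_le _
      nlinarith [(le_div_iff₀ h1).mp hle]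

lemma aux_floor_eq (θ : ℝ) (hθ0 : 0 < θ) (n : ℕ) {x : ℝ}
    (hx : x ∈ Ioc (θ / (n + 2)) (θ / (n + 1))) : ⌊θ / x⌋ = (n:ℤ) + 1 := by
  have hn2 : (0:ℝ) < (n:ℝ) + 2 := by positivity
  have hn1 : (0:ℝ) < (n:ℝ) + 1 := by positivity
  have hx0 : 0 < x := lt_of_le_of_lt (by positivity) hx.1
  rw [Int.floor_eq_iff]
  constructor
  · push_cast
    rw [le_div_iff₀ hx0]
    calc ((n:ℝ) + 1) * x ≤ ((n:ℝ) + 1) * (θ / (n+1)) := by gcongr; exact hx.2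
      _ = θ := by field_simp
  · push_cast
    rw [div_lt_iff₀ hx0]
    have h1 := hx.1
    rw [div_lt_iff₀ hn2] at h1
    nlinarith

lemma aux_cpow_div (θ p : ℝ) (hθ0 : 0 < θ) (hp : 0 < p) (s : ℂ) :
    ((θ / p : ℝ) : ℂ) ^ s = (θ:ℂ) ^ s / (p:ℂ) ^ s := by
  rw [div_eq_mul_inv, Complex.ofReal_mul, Complex.mul_cpow_ofReal_nonneg hθ0.le
    (inv_nonneg.mpr hp.le), Complex.ofReal_inv, Complex.inv_cpow _ _
    (by rw [Complex.arg_ofReal_of_nonneg hp.le]; exact Real.pi_ne_zero.symm), div_eq_mul_inv]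

lemma aux_piece (θ : ℝ) (hθ0 : 0 < θ) {s : ℂ} (hs : 1 < s.re) (n : ℕ) :
    ∫ x in Ioc (θ / (n + 2)) (θ / (n + 1)), ((⌊θ / x⌋ : ℤ) : ℂ) * (x:ℂ) ^ (s-1)
      = ((θ:ℂ) ^ s / s) *
        (((((n:ℂ)+1) ^ (1-s) - ((n:ℂ)+2) ^ (1-s))) + ((n:ℂ)+2) ^ (-s)) := by
  have hs0 : s ≠ 0 := Complex.ne_zero_of_one_lt_re hs
  have hn2 : (0:ℝ) < (n:ℝ) + 2 := by positivity
  have hn1 : (0:ℝ) < (n:ℝ) + 1 := by positivity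
  have hab : θ / ((n:ℝ) + 2) ≤ θ / ((n:ℝ) + 1) := by
    apply div_le_div_of_nonneg_left hθ0.le hn1; linarith
  rw [setIntegral_congr_fun measurableSet_Ioc
    (g := fun x : ℝ ↦ (((n:ℂ)+1)) * (x:ℂ) ^ (s-1))
    (fun x hx ↦ by rw [aux_floor_eq θ hθ0 n hx]; push_cast; ring),
    MeasureTheory.integral_const_mul, ← intervalIntegral.integral_of_le hab,
    integral_cpow (Or.inl (by simp; linarith))]
  have hc1 : ((θ / ((n:ℝ)+1) : ℝ) : ℂ) ^ s = (θ:ℂ)^s / (((n:ℝ)+1 : ℝ):ℂ) ^ s :=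
    aux_cpow_div θ _ hθ0 hn1 s
  have hc2 : ((θ / ((n:ℝ)+2) : ℝ) : ℂ) ^ s = (θ:ℂ)^s / (((n:ℝ)+2 : ℝ):ℂ) ^ s :=
    aux_cpow_div θ _ hθ0 hn2 s
  push_cast at hc1 hc2 ⊢
  rw [sub_add_cancel, hc1, hc2]
  have hA : ((n:ℂ)+1) ≠ 0 := by
    have : (((n:ℝ)+1 : ℝ) : ℂ) ≠ 0 := Complex.ofReal_ne_zero.mpr hn1.ne'
    push_cast at this; exact this
  have hB : ((n:ℂ)+2) ≠ 0 := by
    have : (((n:ℝ)+2 : ℝ) : ℂ) ≠ 0 := Complex.ofReal_ne_zero.mpr hn2.ne'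
    push_cast at this; exact this
  have hAs : ((n:ℂ)+1) ^ s ≠ 0 := fun h ↦ by simpa [Complex.cpow_eq_zero_iff, hA] using h
  have hBs : ((n:ℂ)+2) ^ s ≠ 0 := fun h ↦ by simpa [Complex.cpow_eq_zero_iff, hB] using h
  have e1 : ((n:ℂ)+1) ^ (1-s) = ((n:ℂ)+1) * (((n:ℂ)+1) ^ s)⁻¹ := by
    rw [show (1:ℂ) - s = 1 + (-s) by ring, Complex.cpow_add _ _ hA, Complex.cpow_one,
      Complex.cpow_neg]
  have e2 : ((n:ℂ)+2) ^ (1-s) = ((n:ℂ)+2) * (((n:ℂ)+2) ^ s)⁻¹ := by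
    rw [show (1:ℂ) - s = 1 + (-s) by ring, Complex.cpow_add _ _ hB, Complex.cpow_one,
      Complex.cpow_neg]
  rw [e1, e2, Complex.cpow_neg]
  field_simp
  ring

lemma aux_g_tendsto {s : ℂ} (hs : 1 < s.re) :
    Tendsto (fun N : ℕ ↦ ((N:ℂ) + 1) ^ (1 - s)) atTop (𝓝 0) := by
  rw [tendsto_zero_iff_norm_tendsto_zero]
  have key : ∀ N : ℕ, ‖((N:ℂ) + 1) ^ (1 - s)‖ = ((N:ℝ) + 1) ^ (1 - s.re) := by
    intro N
    have h1 : ((N:ℂ) + 1) = (((N:ℝ) + 1 : ℝ) : ℂ) := by push_cast; ring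
    rw [h1, aux_norm_cpow (by positivity) (1 - s)]
    congr 1
  simp only [key]
  have h2 : Tendsto (fun N : ℕ ↦ ((N:ℝ) + 1)) atTop atTop :=
    tendsto_atTop_add_const_right _ _ tendsto_natCast_atTop_atTop
  have h3 := (tendsto_rpow_neg_atTop (y := s.re - 1) (by linarith)).comp h2
  simpa [neg_sub, Function.comp_def] using h3

lemma aux_h_hasSum {s : ℂ} (hs : 1 < s.re) :
    HasSum (fun n : ℕ ↦ ((n:ℂ) + 2) ^ (-s)) (riemannZeta s - 1) := by
  have hsum : Summable (fun n : ℕ ↦ 1 / ((n:ℂ)) ^ s) :=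
    Complex.summable_one_div_nat_cpow.mpr hs
  have h1 : Summable (fun n : ℕ ↦ 1 / ((n:ℂ) + 1) ^ s) := by
    have := (summable_nat_add_iff 1).mpr hsum
    refine this.congr fun n ↦ by push_cast; ring_nf
  have h2 : HasSum (fun n : ℕ ↦ 1 / ((n:ℂ) + 1) ^ s) (riemannZeta s) := by
    rw [zeta_eq_tsum_one_div_nat_add_one_cpow hs]
    exact h1.hasSum
  have h3 := (hasSum_nat_add_iff (f := fun n : ℕ ↦ 1 / ((n:ℂ) + 1) ^ s)
    (g := riemannZeta s - 1) 1).mpr (by simpa using h2)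
  refine h3.congr_fun fun n ↦ ?_
  rw [Complex.cpow_neg, one_div]
  push_cast; ring_nf

lemma aux_floor_integral (θ : ℝ) (hθ0 : 0 < θ) (hθ1 : θ ≤ 1) {s : ℂ} (hs : 1 < s.re) :
    ∫ x in Ioc (0:ℝ) 1, ((⌊θ / x⌋ : ℤ) : ℂ) * (x:ℂ) ^ (s-1)
      = riemannZeta s * (θ:ℂ) ^ s / s := by
  have hint := aux_floor_int θ hθ0 hs
  have hsplit : Ioc (0:ℝ) 1 = Ioc 0 θ ∪ Ioc θ 1 := (Set.Ioc_union_Ioc_eq_Ioc hθ0.le hθ1).symm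
  have hdisj : Disjoint (Ioc (0:ℝ) θ) (Ioc θ 1) := by
    rw [Set.Ioc_disjoint_Ioc]
    simp [inf_le_left, le_sup_right]
  have hzero : ∫ x in Ioc θ 1, ((⌊θ / x⌋ : ℤ) : ℂ) * (x:ℂ) ^ (s-1) = 0 := by
    rw [setIntegral_congr_fun measurableSet_Ioc (g := fun _ ↦ (0:ℂ))]
    · exact integral_zero _ _
    · intro x hx
      have hx0 : 0 < x := hθ0.trans hx.1
      have : ⌊θ / x⌋ = 0 := by
        rw [Int.floor_eq_iff]
        constructor
        · push_cast; positivity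
        · push_cast
          rw [div_lt_iff₀ hx0]
          nlinarith [hx.1]
      simp [this]
  rw [hsplit, setIntegral_union hdisj measurableSet_Ioc
    (hint.mono_set (by rw [hsplit]; exact subset_union_left))
    (hint.mono_set (by rw [hsplit]; exact subset_union_right)), hzero, add_zero]
  -- now the union decomposition
  have hUsub : (⋃ n : ℕ, Ioc (θ / (n + 2)) (θ / (n + 1))) = Ioc (0:ℝ) θ := aux_union θ hθ0
  have hmeas : ∀ n : ℕ, MeasurableSet (Ioc (θ / ((n:ℝ) + 2)) (θ / ((n:ℝ) + 1))) :=
    fun n ↦ measurableSet_Ioc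
  have hdisj2 : Pairwise (Function.onFun Disjoint fun n : ℕ ↦ Ioc (θ / ((n:ℝ) + 2)) (θ / ((n:ℝ) + 1))) := by
    have key : ∀ m k : ℕ, m < k →
        Disjoint (Ioc (θ / ((m:ℝ) + 2)) (θ / ((m:ℝ) + 1))) (Ioc (θ / ((k:ℝ) + 2)) (θ / ((k:ℝ) + 1))) := by
      intro m k hmk
      rw [Set.Ioc_disjoint_Ioc]
      refine le_trans inf_le_right (le_trans ?_ le_sup_left)
      apply div_le_div_of_nonneg_left hθ0.le (by positivity)
      have : (m:ℝ) + 1 ≤ (k:ℝ) := by exact_mod_cast hmk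
      linarith
    intro m k hmk
    rcases lt_or_gt_of_ne hmk with h | h
    · exact key m k h
    · exact (key k m h).symm
  have hIOn : IntegrableOn (fun x : ℝ ↦ ((⌊θ / x⌋ : ℤ) : ℂ) * (x:ℂ) ^ (s-1))
      (⋃ n : ℕ, Ioc (θ / ((n:ℝ) + 2)) (θ / ((n:ℝ) + 1))) := by
    rw [hUsub]
    exact hint.mono_set (by rw [hsplit]; exact subset_union_left)
  have hHasSum := hasSum_integral_iUnion hmeas hdisj2 hIOn
  rw [hUsub] at hHasSum
  -- identify the sum
  have hs0 : s ≠ 0 := Complex.ne_zero_of_one_lt_re hs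
  have htend1 := hHasSum.tendsto_sum_nat
  have hpsum : ∀ N : ℕ, (∑ n ∈ Finset.range N,
      ∫ x in Ioc (θ / ((n:ℝ) + 2)) (θ / ((n:ℝ) + 1)), ((⌊θ / x⌋ : ℤ) : ℂ) * (x:ℂ) ^ (s-1))
      = ((θ:ℂ) ^ s / s) * ((1 - ((N:ℂ) + 1) ^ (1-s)) + ∑ n ∈ Finset.range N, ((n:ℂ) + 2) ^ (-s)) := by
    intro N
    have : ∀ n ∈ Finset.range N, (∫ x in Ioc (θ / ((n:ℝ) + 2)) (θ / ((n:ℝ) + 1)),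
        ((⌊θ / x⌋ : ℤ) : ℂ) * (x:ℂ) ^ (s-1))
        = ((θ:ℂ) ^ s / s) * ((((fun k : ℕ ↦ ((k:ℂ)+1) ^ (1-s)) n - (fun k : ℕ ↦ ((k:ℂ)+1) ^ (1-s)) (n+1))) + ((n:ℂ)+2) ^ (-s)) := by
      intro n _
      rw [aux_piece θ hθ0 hs n]
      push_cast
      ring_nf
    rw [Finset.sum_congr rfl this, ← Finset.mul_sum, Finset.sum_add_distrib,
      Finset.sum_range_sub' (fun k : ℕ ↦ ((k:ℂ)+1) ^ (1-s)) N]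
    norm_num
  have htend2 : Tendsto (fun N : ℕ ↦ ((θ:ℂ) ^ s / s) *
      ((1 - ((N:ℂ) + 1) ^ (1-s)) + ∑ n ∈ Finset.range N, ((n:ℂ) + 2) ^ (-s))) atTop
      (𝓝 (((θ:ℂ) ^ s / s) * ((1 - 0) + (riemannZeta s - 1)))) :=
    (((tendsto_const_nhds.sub (aux_g_tendsto hs)).add
      (aux_h_hasSum hs).tendsto_sum_nat)).const_mul _
  have := tendsto_nhds_unique (htend1.congr (fun N ↦ (hpsum N))) htend2
  rw [this]
  ring

lemma aux_key (θ : ℝ) (hθ0 : 0 < θ) (hθ1 : θ ≤ 1) {s : ℂ} (hs : 1 < s.re) :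
    ∫ x in Ioc (0:ℝ) 1, ((Int.fract (θ / x) : ℝ) : ℂ) * (x:ℂ) ^ (s-1)
      = (θ:ℂ) / (s - 1) - riemannZeta s * (θ:ℂ) ^ s / s := by
  have hs1 : s - 1 ≠ 0 := by
    intro h
    have : s = 1 := by linear_combination h
    rw [this] at hs; simp at hs
  have hsm2 : (-1:ℝ) < (s-2).re := by simp; linarith
  have hcongr : ∀ x ∈ Ioc (0:ℝ) 1,
      ((Int.fract (θ / x) : ℝ) : ℂ) * (x:ℂ) ^ (s-1)
      = (θ:ℂ) * (x:ℂ) ^ (s-2) - ((⌊θ / x⌋ : ℤ) : ℂ) * (x:ℂ) ^ (s-1) := by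
    intro x hx
    have hx0 : (x:ℂ) ≠ 0 := Complex.ofReal_ne_zero.mpr hx.1.ne'
    have hfr : ((Int.fract (θ / x) : ℝ) : ℂ) = ((θ / x : ℝ) : ℂ) - ((⌊θ / x⌋ : ℤ) : ℂ) := by
      rw [Int.fract]; push_cast; ring
    have hpow : (x:ℂ) ^ (s-1) = (x:ℂ) ^ (s-2) * (x:ℂ) := by
      rw [show s - 1 = (s-2) + 1 by ring, Complex.cpow_add _ _ hx0, Complex.cpow_one]
    rw [hfr, sub_mul, Complex.ofReal_div]
    congr 1
    rw [hpow]
    field_simp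
  rw [setIntegral_congr_fun measurableSet_Ioc hcongr, integral_sub
    ((aux_int_cpow hsm2).const_mul (θ:ℂ)) (aux_floor_int θ hθ0 hs),
    aux_floor_integral θ hθ0 hθ1 hs, MeasureTheory.integral_const_mul,
    ← intervalIntegral.integral_of_le zero_le_one, integral_cpow (Or.inl hsm2)]
  rw [show s - 2 + 1 = s - 1 by ring, Complex.ofReal_one, Complex.ofReal_zero,
    Complex.one_cpow, Complex.zero_cpow hs1]
  ring

theorem stmt_13 (n : ℕ) (a : Fin n → ℂ) (θ : Fin n → ℝ)
    (hθ : ∀ i, 0 < θ i ∧ θ i ≤ 1)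
    (hconstraint : ∑ i, a i * (θ i : ℂ) = 0)
    (s : ℂ) (hs : 1 < s.re) :
    ∫ x in (0:ℝ)..1, ((∑ i, a i * ((Int.fract (θ i / x) : ℝ) : ℂ)) + 1) * (x : ℂ) ^ (s - 1) =
      (1 / s) * (1 - riemannZeta s * ∑ i, a i * (θ i : ℂ) ^ s) := by
  have hs0 : s ≠ 0 := Complex.ne_zero_of_one_lt_re hs
  have hs1 : s - 1 ≠ 0 := by
    intro h
    have : s = 1 := by linear_combination h
    rw [this] at hs; simp at hs
  have hsm1 : (-1:ℝ) < (s-1).re := by simp; linarith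
  rw [intervalIntegral.integral_of_le zero_le_one]
  have hcongr : ∀ x ∈ Ioc (0:ℝ) 1,
      ((∑ i, a i * ((Int.fract (θ i / x) : ℝ) : ℂ)) + 1) * (x : ℂ) ^ (s - 1)
      = (∑ i, a i * (((Int.fract (θ i / x) : ℝ) : ℂ) * (x : ℂ) ^ (s - 1))) + (x : ℂ) ^ (s - 1) := by
    intro x _
    rw [add_mul, one_mul, Finset.sum_mul]
    simp_rw [mul_assoc]
  rw [setIntegral_congr_fun measurableSet_Ioc hcongr]
  have hint_each : ∀ i : Fin n, IntegrableOn
      (fun x : ℝ ↦ a i * (((Int.fract (θ i / x) : ℝ) : ℂ) * (x : ℂ) ^ (s - 1))) (Ioc (0:ℝ) 1) :=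
    fun i ↦ (aux_fract_int (θ i) hs).const_mul (a i)
  rw [MeasureTheory.integral_add (integrable_finset_sum _ (fun i _ ↦ hint_each i))
    (aux_int_cpow hsm1), MeasureTheory.integral_finset_sum _ (fun i _ ↦ hint_each i)]
  have hone : ∫ x in Ioc (0:ℝ) 1, (x : ℂ) ^ (s - 1) = 1 / s := by
    rw [← intervalIntegral.integral_of_le zero_le_one, integral_cpow (Or.inl hsm1),
      show s - 1 + 1 = s by ring, Complex.ofReal_one, Complex.ofReal_zero,
      Complex.one_cpow, Complex.zero_cpow hs0]
    ring
  have heach : ∀ i : Fin n,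
      (∫ x in Ioc (0:ℝ) 1, a i * (((Int.fract (θ i / x) : ℝ) : ℂ) * (x : ℂ) ^ (s - 1)))
      = (a i * (θ i : ℂ)) * (1/(s-1)) - (riemannZeta s / s) * (a i * (θ i : ℂ) ^ s) := by
    intro i
    rw [MeasureTheory.integral_const_mul, aux_key (θ i) (hθ i).1 (hθ i).2 hs]
    ring
  rw [hone, Finset.sum_congr rfl (fun i _ ↦ heach i), Finset.sum_sub_distrib,
    ← Finset.sum_mul, ← Finset.mul_sum, hconstraint, zero_mul, zero_sub]
  field_simp
  ring
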